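/- Let f₀(α,β,γ) = 4 − cos(α+β+γ) − cos(−α+β+γ) − cos(α−β+γ) + cos(α+β−γ). For every real m with 0 < m ≤ 4 − 2^{3/2}, the trigonometric polynomial f₀ − m belongs to σ(1,1,1) but does not belong to Q(1,1,1). -/

import Mathlib

open Complex ComplexOrder

noncomputable section

/-- The lattice box `S(N₁,N₂,N₃)`. -/
def Sbox (N₁ N₂ N₃ : ℕ) : Finset (ℤ × ℤ × ℤ) :=
  Finset.Icc (0, 0, 0) ((N₁ : ℤ), (N₂ : ℤ), (N₃ : ℤ))

/-- The lattice box `Δ(N₁,N₂,N₃)`. -/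
def Dbox (N₁ N₂ N₃ : ℕ) : Finset (ℤ × ℤ × ℤ) :=
  Finset.Icc (-(N₁ : ℤ), -(N₂ : ℤ), -(N₃ : ℤ)) ((N₁ : ℤ), (N₂ : ℤ), (N₃ : ℤ))

/-- The character `exp(i(kα + ℓβ + mγ))`. -/
def eChar (δ : ℤ × ℤ × ℤ) (v : ℝ × ℝ × ℝ) : ℂ :=
  Complex.exp (Complex.I *
    ((δ.1 : ℂ) * (v.1 : ℂ) + (δ.2.1 : ℂ) * (v.2.1 : ℂ) + (δ.2.2 : ℂ) * (v.2.2 : ℂ)))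

namespace Ex3

open Real

/-- sample points -/
def ptv (t : ℕ × ℕ × ℕ) : ℝ × ℝ × ℝ := (2*π*t.1/3, 2*π*t.2.1/3, 2*π*t.2.2/3)

def P3 : Finset (ℕ × ℕ × ℕ) := Finset.range 3 ×ˢ Finset.range 3 ×ˢ Finset.range 3

lemma exp_sum_three (n : ℤ) (h1 : -3 < n) (h2 : n < 3) :
    ∑ a ∈ Finset.range 3, Complex.exp (((n : ℂ) * a) * (2 * (π:ℝ) * Complex.I) / 3)
      = if n = 0 then 3 else 0 := by
  rcases eq_or_ne n 0 with rfl | hn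
  · simp
  · rw [if_neg hn]
    set x : ℂ := Complex.exp ((n : ℂ) * (2 * (π:ℝ) * Complex.I) / 3) with hxdef
    have hterm : ∀ a : ℕ, Complex.exp (((n : ℂ) * a) * (2 * (π:ℝ) * Complex.I) / 3) = x ^ a := by
      intro a
      rw [hxdef, ← Complex.exp_nat_mul]
      congr 1; ring
    have h2pi : (2 * (π:ℝ) * Complex.I : ℂ) ≠ 0 := by
      simp [Complex.ext_iff, Real.pi_ne_zero]
    have hx1 : x ≠ 1 := by
      rw [hxdef, Ne, Complex.exp_eq_one_iff]
      rintro ⟨k, hk⟩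
      have hnk : ((n:ℂ) - 3*k) * (2 * (π:ℝ) * Complex.I) = 0 := by
        field_simp at hk ⊢; linear_combination (2 * ((π:ℝ):ℂ) * Complex.I) * hk
      rcases mul_eq_zero.1 hnk with h | h
      · have : (n:ℤ) = 3 * k := by exact_mod_cast sub_eq_zero.1 h
        omega
      · exact h2pi h
    have hx3 : x ^ 3 = 1 := by
      rw [hxdef, ← Complex.exp_nat_mul]
      have h3 : ((3:ℕ):ℂ) * ((n : ℂ) * (2 * (π:ℝ) * Complex.I) / 3)
          = (n:ℂ) * (2 * (π:ℝ) * Complex.I) := by push_cast; ring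
      rw [h3, Complex.exp_int_mul_two_pi_mul_I]
    calc ∑ a ∈ Finset.range 3, Complex.exp (((n : ℂ) * a) * (2 * (π:ℝ) * Complex.I) / 3)
        = ∑ a ∈ Finset.range 3, x ^ a := by simp_rw [hterm]
      _ = (x ^ 3 - 1) / (x - 1) := geom_sum_eq hx1 3
      _ = 0 := by rw [hx3]; simp

lemma eChar_ptv (η : ℤ×ℤ×ℤ) (t : ℕ×ℕ×ℕ) :
    eChar η (ptv t) = Complex.exp (((η.1 : ℂ) * t.1) * (2 * (π:ℝ) * Complex.I) / 3)
      * Complex.exp (((η.2.1 : ℂ) * t.2.1) * (2 * (π:ℝ) * Complex.I) / 3)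
      * Complex.exp (((η.2.2 : ℂ) * t.2.2) * (2 * (π:ℝ) * Complex.I) / 3) := by
  simp only [eChar, ptv, ← Complex.exp_add]
  congr 1
  push_cast
  ring

lemma orth (η : ℤ×ℤ×ℤ) (ha : -3 < η.1 ∧ η.1 < 3) (hb : -3 < η.2.1 ∧ η.2.1 < 3)
    (hc : -3 < η.2.2 ∧ η.2.2 < 3) :
    ∑ t ∈ P3, eChar η (ptv t) = if η = 0 then 27 else 0 := by
  rw [P3, Finset.sum_product]
  simp_rw [Finset.sum_product]
  simp_rw [eChar_ptv]
  simp_rw [← Finset.mul_sum]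
  simp_rw [← Finset.sum_mul]
  simp_rw [← Finset.mul_sum]
  simp_rw [← Finset.sum_mul]
  rw [exp_sum_three _ ha.1 ha.2, exp_sum_three _ hb.1 hb.2, exp_sum_three _ hc.1 hc.2]
  have hiff : η = 0 ↔ η.1 = 0 ∧ η.2.1 = 0 ∧ η.2.2 = 0 := by
    rw [Prod.ext_iff, Prod.ext_iff]; tauto
  split_ifs with h1 h2 h3 h4 <;> simp_all <;> norm_num

lemma eChar_mul (x y : ℤ×ℤ×ℤ) (v : ℝ×ℝ×ℝ) : eChar x v * eChar y v = eChar (x+y) v := by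
  simp only [eChar, ← Complex.exp_add, Prod.fst_add, Prod.snd_add]
  congr 1
  push_cast
  ring

lemma eChar_conj (p : ℤ×ℤ×ℤ) (v : ℝ×ℝ×ℝ) :
    (starRingEnd ℂ) (eChar p v) = eChar (-p) v := by
  simp only [eChar, ← Complex.exp_conj, map_mul, map_add, Complex.conj_I, Complex.conj_ofReal,
    map_intCast, Prod.fst_neg, Prod.snd_neg]
  congr 1
  push_cast
  ring

lemma orth' (ε δ : ℤ×ℤ×ℤ) (ha : -3 < ε.1 - δ.1 ∧ ε.1 - δ.1 < 3)
    (hb : -3 < ε.2.1 - δ.2.1 ∧ ε.2.1 - δ.2.1 < 3)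
    (hc : -3 < ε.2.2 - δ.2.2 ∧ ε.2.2 - δ.2.2 < 3) :
    ∑ t ∈ P3, eChar ε (ptv t) * eChar (-δ) (ptv t) = if ε = δ then 27 else 0 := by
  simp_rw [eChar_mul]
  rw [orth (ε + -δ) (by simp only [Prod.fst_add, Prod.fst_neg]; omega)
    (by simp only [Prod.snd_add, Prod.snd_neg, Prod.fst_add, Prod.fst_neg]; omega)
    (by simp only [Prod.snd_add, Prod.snd_neg]; omega)]
  congr 1
  simp only [Prod.ext_iff, Prod.fst_add, Prod.snd_add, Prod.fst_neg, Prod.snd_neg, Prod.fst_zero,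
    Prod.snd_zero, eq_iff_iff]
  omega

lemma sum_rot {α β γ : Type*} (A : Finset α) (B : Finset β) (C : Finset γ)
    (f : α → β → γ → ℂ) :
    ∑ a ∈ A, ∑ b ∈ B, ∑ c ∈ C, f a b c = ∑ b ∈ B, ∑ c ∈ C, ∑ a ∈ A, f a b c := by
  rw [Finset.sum_comm]
  exact Finset.sum_congr rfl fun b _ => Finset.sum_comm

lemma Sbox_bounds {p : ℤ×ℤ×ℤ} (h : p ∈ Sbox 1 1 1) :
    0 ≤ p.1 ∧ p.1 ≤ 1 ∧ 0 ≤ p.2.1 ∧ p.2.1 ≤ 1 ∧ 0 ≤ p.2.2 ∧ p.2.2 ≤ 1 := by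
  simp only [Sbox, Finset.mem_Icc, Prod.le_def, Prod.mk.injEq] at h
  obtain ⟨⟨a1, a2, a3⟩, b1, b2, b3⟩ := h
  norm_num at *
  omega

lemma Dbox_bounds {p : ℤ×ℤ×ℤ} (h : p ∈ Dbox 1 1 1) :
    -1 ≤ p.1 ∧ p.1 ≤ 1 ∧ -1 ≤ p.2.1 ∧ p.2.1 ≤ 1 ∧ -1 ≤ p.2.2 ∧ p.2.2 ≤ 1 := by
  simp only [Dbox, Finset.mem_Icc, Prod.le_def, Prod.mk.injEq] at h
  obtain ⟨⟨a1, a2, a3⟩, b1, b2, b3⟩ := h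
  norm_num at *
  omega

lemma Rcoeff (r : ℕ) (q : Fin r → (ℤ×ℤ×ℤ) → ℂ) (δ : ℤ×ℤ×ℤ) (hδ : δ ∈ Dbox 1 1 1) :
    ∑ t ∈ P3, (∑ j, ((‖∑ p ∈ Sbox 1 1 1, q j p * eChar p (ptv t)‖ : ℝ) : ℂ)^2)
        * eChar (-δ) (ptv t)
      = 27 * ∑ j, ∑ p' ∈ Sbox 1 1 1,
          (if δ + p' ∈ Sbox 1 1 1 then q j (δ + p') * (starRingEnd ℂ) (q j p') else 0) := by
  obtain ⟨hd1, hd2, hd3, hd4, hd5, hd6⟩ := Dbox_bounds hδ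
  have habs : ∀ z : ℂ, ((‖z‖ : ℝ) : ℂ)^2 = z * (starRingEnd ℂ) z := by
    intro z
    rw [Complex.mul_conj, ← Complex.ofReal_pow]
    norm_cast
    rw [Complex.normSq_eq_norm_sq]
  have step1 : ∀ t ∈ P3,
      (∑ j, ((‖∑ p ∈ Sbox 1 1 1, q j p * eChar p (ptv t)‖ : ℝ):ℂ)^2) * eChar (-δ) (ptv t)
      = ∑ j, ∑ p ∈ Sbox 1 1 1, ∑ p' ∈ Sbox 1 1 1,
          (q j p * (starRingEnd ℂ) (q j p'))
            * (eChar p (ptv t) * eChar (-p') (ptv t) * eChar (-δ) (ptv t)) := by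
    intro t _
    simp_rw [habs, map_sum, map_mul, eChar_conj, Finset.sum_mul_sum, Finset.sum_mul]
    apply Finset.sum_congr rfl; intro j _
    apply Finset.sum_congr rfl; intro p _
    apply Finset.sum_congr rfl; intro p' _
    ring
  rw [Finset.sum_congr rfl step1, Finset.sum_comm, Finset.mul_sum]
  apply Finset.sum_congr rfl; intro j _
  rw [sum_rot]
  have step2 : ∀ p ∈ Sbox 1 1 1, ∀ p' ∈ Sbox 1 1 1,
      ∑ t ∈ P3, (q j p * (starRingEnd ℂ) (q j p'))
          * (eChar p (ptv t) * eChar (-p') (ptv t) * eChar (-δ) (ptv t))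
      = (q j p * (starRingEnd ℂ) (q j p')) * (if p = δ + p' then 27 else 0) := by
    intro p hp p' hp'
    obtain ⟨s1, s2, s3, s4, s5, s6⟩ := Sbox_bounds hp
    obtain ⟨u1, u2, u3, u4, u5, u6⟩ := Sbox_bounds hp'
    rw [← Finset.mul_sum]
    congr 1
    simp_rw [eChar_mul]
    rw [orth (p + -p' + -δ) (by simp only [Prod.fst_add, Prod.fst_neg]; omega)
      (by simp only [Prod.snd_add, Prod.snd_neg, Prod.fst_add, Prod.fst_neg]; omega)
      (by simp only [Prod.snd_add, Prod.snd_neg]; omega)]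
    congr 1
    simp only [eq_iff_iff]
    constructor
    · intro h
      have : p = δ + p' := by
        have := congrArg (· + δ + p') h
        simpa [add_assoc, add_comm, add_left_comm] using this
      exact this
    · intro h; rw [h]; abel
  rw [Finset.sum_congr rfl fun p hp => Finset.sum_congr rfl (step2 p hp)]
  simp_rw [mul_ite, mul_zero]
  rw [Finset.sum_comm]
  simp_rw [Finset.sum_ite_eq' (Sbox 1 1 1)]
  rw [Finset.mul_sum]
  apply Finset.sum_congr rfl; intro p' _
  split_ifs with h
  · ring
  · ring

def Tsupp : Finset (ℤ×ℤ×ℤ) :=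
  {(0,0,0),(1,1,-1),(-1,-1,1),(1,1,1),(-1,-1,-1),(-1,1,1),(1,-1,-1),(1,-1,1),(-1,1,-1)}

def q0 (m : ℝ) : ℤ×ℤ×ℤ → ℂ := fun δ =>
  if δ = (0,0,0) then ((4 - m : ℝ):ℂ)
  else if δ = (1,1,-1) ∨ δ = (-1,-1,1) then 1/2
  else if δ ∈ Tsupp then -(1/2)
  else 0

lemma q0_zero (m : ℝ) (δ : ℤ×ℤ×ℤ) (h : δ ∉ Tsupp) : q0 m δ = 0 := by
  have h' : δ ≠ (0,0,0) ∧ ¬(δ = (1,1,-1) ∨ δ = (-1,-1,1)) := by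
    simp only [Tsupp, Finset.mem_insert, Finset.mem_singleton] at h
    tauto
  simp only [q0]
  rw [if_neg h'.1, if_neg h'.2, if_neg h]

lemma cosC' (u : ℂ) : Complex.cos u = (Complex.exp (u*Complex.I) + Complex.exp (-u*Complex.I))/2 := by
  linear_combination (Complex.two_cos u)/2

lemma rep (m : ℝ) (v : ℝ × ℝ × ℝ) :
    (((4 : ℝ) - Real.cos (v.1 + v.2.1 + v.2.2) - Real.cos (-v.1 + v.2.1 + v.2.2)
      - Real.cos (v.1 - v.2.1 + v.2.2) + Real.cos (v.1 + v.2.1 - v.2.2) : ℝ) : ℂ) - (m:ℂ)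
    = ∑ δ ∈ Dbox 1 1 1, q0 m δ * eChar δ v := by
  obtain ⟨x, y, z⟩ := v
  have hsub : Tsupp ⊆ Dbox 1 1 1 := by decide
  rw [← Finset.sum_subset hsub (fun δ _ hδ => by rw [q0_zero m δ hδ, zero_mul])]
  rw [show Tsupp = {(0,0,0),(1,1,-1),(-1,-1,1),(1,1,1),(-1,-1,-1),(-1,1,1),(1,-1,-1),(1,-1,1),(-1,1,-1)} from rfl]
  rw [Finset.sum_insert (by decide), Finset.sum_insert (by decide), Finset.sum_insert (by decide),
      Finset.sum_insert (by decide), Finset.sum_insert (by decide), Finset.sum_insert (by decide),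
      Finset.sum_insert (by decide), Finset.sum_insert (by decide), Finset.sum_singleton]
  have e1 : eChar (1,1,1) (x,y,z) = Complex.exp ((((x+y+z : ℝ)):ℂ)*Complex.I) := by
    simp only [eChar]; congr 1; push_cast; ring
  have e1' : eChar (-1,-1,-1) (x,y,z) = Complex.exp (-(((x+y+z : ℝ)):ℂ)*Complex.I) := by
    simp only [eChar]; congr 1; push_cast; ring
  have e2 : eChar (-1,1,1) (x,y,z) = Complex.exp ((((-x+y+z : ℝ)):ℂ)*Complex.I) := by
    simp only [eChar]; congr 1; push_cast; ring
  have e2' : eChar (1,-1,-1) (x,y,z) = Complex.exp (-(((-x+y+z : ℝ)):ℂ)*Complex.I) := by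
    simp only [eChar]; congr 1; push_cast; ring
  have e3 : eChar (1,-1,1) (x,y,z) = Complex.exp ((((x-y+z : ℝ)):ℂ)*Complex.I) := by
    simp only [eChar]; congr 1; push_cast; ring
  have e3' : eChar (-1,1,-1) (x,y,z) = Complex.exp (-(((x-y+z : ℝ)):ℂ)*Complex.I) := by
    simp only [eChar]; congr 1; push_cast; ring
  have e4 : eChar (1,1,-1) (x,y,z) = Complex.exp ((((x+y-z : ℝ)):ℂ)*Complex.I) := by
    simp only [eChar]; congr 1; push_cast; ring
  have e4' : eChar (-1,-1,1) (x,y,z) = Complex.exp (-(((x+y-z : ℝ)):ℂ)*Complex.I) := by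
    simp only [eChar]; congr 1; push_cast; ring
  have e0 : eChar (0,0,0) (x,y,z) = 1 := by
    simp [eChar]
  rw [e1, e1', e2, e2', e3, e3', e4, e4', e0]
  simp only [q0, Tsupp]
  norm_num [Prod.ext_iff]
  push_cast
  simp_rw [cosC']
  ring_nf

lemma Lcoeff (m : ℝ) (δ : ℤ×ℤ×ℤ) (hδ : δ ∈ Dbox 1 1 1) :
    ∑ t ∈ P3, (∑ δ' ∈ Dbox 1 1 1, q0 m δ' * eChar δ' (ptv t)) * eChar (-δ) (ptv t)
      = 27 * q0 m δ := by
  simp_rw [Finset.sum_mul]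
  rw [Finset.sum_comm]
  have step : ∀ δ' ∈ Dbox 1 1 1,
      ∑ t ∈ P3, (q0 m δ' * eChar δ' (ptv t)) * eChar (-δ) (ptv t)
      = if δ' = δ then q0 m δ' * 27 else 0 := by
    intro δ' hδ'
    obtain ⟨a1,a2,a3,a4,a5,a6⟩ := Dbox_bounds hδ'
    obtain ⟨b1,b2,b3,b4,b5,b6⟩ := Dbox_bounds hδ
    simp_rw [mul_assoc, ← Finset.mul_sum, eChar_mul]
    rw [orth (δ' + -δ) (by simp only [Prod.fst_add, Prod.fst_neg]; omega)
      (by simp only [Prod.snd_add, Prod.snd_neg, Prod.fst_add, Prod.fst_neg]; omega)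
      (by simp only [Prod.snd_add, Prod.snd_neg]; omega)]
    rcases eq_or_ne δ' δ with rfl | h
    · simp
    · rw [if_neg (fun hc => h (by simpa [add_neg_eq_zero] using hc)), if_neg h, mul_zero]
  rw [Finset.sum_congr rfl step,
    Finset.sum_ite_eq' (Dbox 1 1 1) δ (fun δ' => q0 m δ' * 27), if_pos hδ]
  ring

lemma q0_val000 (m : ℝ) : q0 m (0,0,0) = ((4 - m : ℝ):ℂ) := by simp [q0]

lemma q0_val111 (m : ℝ) : q0 m (1,1,1) = -(1/2) := by
  simp only [q0]
  rw [if_neg (by decide), if_neg (by decide), if_pos (by decide)]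

lemma q0_valm11 (m : ℝ) : q0 m (-1,1,1) = -(1/2) := by
  simp only [q0]
  rw [if_neg (by decide), if_neg (by decide), if_pos (by decide)]

lemma q0_val1m1 (m : ℝ) : q0 m (1,-1,1) = -(1/2) := by
  simp only [q0]
  rw [if_neg (by decide), if_neg (by decide), if_pos (by decide)]

lemma q0_val11m (m : ℝ) : q0 m (1,1,-1) = (1/2) := by
  simp only [q0]
  rw [if_neg (by decide), if_pos (by decide)]

lemma Sbox_eq : Sbox 1 1 1
    = {(0,0,0),(0,0,1),(0,1,0),(0,1,1),(1,0,0),(1,0,1),(1,1,0),(1,1,1)} := by decide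

lemma ev_expand (δ : ℤ×ℤ×ℤ) (g : ℤ×ℤ×ℤ → ℂ) :
    ∑ p' ∈ Sbox 1 1 1, (if δ + p' ∈ Sbox 1 1 1 then g p' else 0)
    = (if δ + (0,0,0) ∈ Sbox 1 1 1 then g (0,0,0) else 0)
    + (if δ + (0,0,1) ∈ Sbox 1 1 1 then g (0,0,1) else 0)
    + (if δ + (0,1,0) ∈ Sbox 1 1 1 then g (0,1,0) else 0)
    + (if δ + (0,1,1) ∈ Sbox 1 1 1 then g (0,1,1) else 0)
    + (if δ + (1,0,0) ∈ Sbox 1 1 1 then g (1,0,0) else 0)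
    + (if δ + (1,0,1) ∈ Sbox 1 1 1 then g (1,0,1) else 0)
    + (if δ + (1,1,0) ∈ Sbox 1 1 1 then g (1,1,0) else 0)
    + (if δ + (1,1,1) ∈ Sbox 1 1 1 then g (1,1,1) else 0) := by
  rw [Sbox_eq]
  rw [Finset.sum_insert (by decide), Finset.sum_insert (by decide), Finset.sum_insert (by decide),
      Finset.sum_insert (by decide), Finset.sum_insert (by decide), Finset.sum_insert (by decide),
      Finset.sum_insert (by decide), Finset.sum_singleton]
  ring

lemma ev111 (g : ℤ×ℤ×ℤ → ℂ) :
    ∑ p' ∈ Sbox 1 1 1, (if (1,1,1) + p' ∈ Sbox 1 1 1 then g p' else 0) = g (0,0,0) := by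
  rw [ev_expand]
  simp (config := { decide := true }) only [ite_true, ite_false, add_zero, zero_add]

lemma evm111 (g : ℤ×ℤ×ℤ → ℂ) :
    ∑ p' ∈ Sbox 1 1 1, (if (-1,1,1) + p' ∈ Sbox 1 1 1 then g p' else 0) = g (1,0,0) := by
  rw [ev_expand]
  simp (config := { decide := true }) only [ite_true, ite_false, add_zero, zero_add]

lemma ev1m11 (g : ℤ×ℤ×ℤ → ℂ) :
    ∑ p' ∈ Sbox 1 1 1, (if (1,-1,1) + p' ∈ Sbox 1 1 1 then g p' else 0) = g (0,1,0) := by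
  rw [ev_expand]
  simp (config := { decide := true }) only [ite_true, ite_false, add_zero, zero_add]

lemma ev11m1 (g : ℤ×ℤ×ℤ → ℂ) :
    ∑ p' ∈ Sbox 1 1 1, (if (1,1,-1) + p' ∈ Sbox 1 1 1 then g p' else 0) = g (0,0,1) := by
  rw [ev_expand]
  simp (config := { decide := true }) only [ite_true, ite_false, add_zero, zero_add]

lemma ev000 (g : ℤ×ℤ×ℤ → ℂ) :
    ∑ p' ∈ Sbox 1 1 1, (if (0,0,0) + p' ∈ Sbox 1 1 1 then g p' else 0)
    = g (0,0,0) + g (0,0,1) + g (0,1,0) + g (0,1,1)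
      + g (1,0,0) + g (1,0,1) + g (1,1,0) + g (1,1,1) := by
  rw [ev_expand]
  simp (config := { decide := true }) only [ite_true, ite_false, add_zero, zero_add]

lemma pair_bound {r : ℕ} (u w : Fin r → ℂ) (c : ℂ) (hc : ‖c‖ = 1/2)
    (h : ∑ j, u j * (starRingEnd ℂ) (w j) = c) :
    1 ≤ ∑ j, Complex.normSq (u j) + ∑ j, Complex.normSq (w j) := by
  have h1 : (1/2 : ℝ) ≤ ∑ j, ‖u j‖ * ‖w j‖ := by
    rw [← hc, ← h]
    calc ‖∑ j, u j * (starRingEnd ℂ) (w j)‖ ≤ ∑ j, ‖u j * (starRingEnd ℂ) (w j)‖ :=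
          norm_sum_le _ _
      _ = ∑ j, ‖u j‖ * ‖w j‖ := by simp [norm_mul]
  have h2 : ∑ j, 2 * (‖u j‖ * ‖w j‖) ≤ ∑ j, (Complex.normSq (u j) + Complex.normSq (w j)) := by
    refine Finset.sum_le_sum fun j _ => ?_
    rw [Complex.normSq_eq_norm_sq, Complex.normSq_eq_norm_sq]
    nlinarith [sq_nonneg (‖u j‖ - ‖w j‖)]
  rw [← Finset.sum_add_distrib]
  calc (1:ℝ) = 2 * (1/2) := by norm_num
    _ ≤ 2 * ∑ j, ‖u j‖ * ‖w j‖ := by linarith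
    _ = ∑ j, 2 * (‖u j‖ * ‖w j‖) := Finset.mul_sum _ _ _
    _ ≤ _ := h2

lemma rpow32 : (2:ℝ) ^ ((3:ℝ)/2) = 2 * Real.sqrt 2 := by
  rw [show (3:ℝ)/2 = 1 + 1/2 by norm_num, Real.rpow_add two_pos, Real.rpow_one,
    ← Real.sqrt_eq_rpow]

lemma key_ineq (x y z : ℝ) :
    Real.cos (x+y+z) + Real.cos (-x+y+z) + (Real.cos (x-y+z) - Real.cos (x+y-z))
      ≤ 2 * Real.sqrt 2 := by
  have h1 := Real.cos_add_cos (x+y+z) (-x+y+z)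
  have h2 := Real.cos_sub_cos (x-y+z) (x+y-z)
  rw [show ((x+y+z)+(-x+y+z))/2 = y+z by ring, show ((x+y+z)-(-x+y+z))/2 = x by ring] at h1
  rw [show ((x-y+z)+(x+y-z))/2 = x by ring, show ((x-y+z)-(x+y-z))/2 = z-y by ring] at h2
  rw [h1, h2]
  set u := Real.cos (y+z)
  set w := Real.sin (z-y)
  set c := Real.cos x
  set s := Real.sin x
  have hs : (u*c - w*s)^2 ≤ 2 := by
    nlinarith [sq_nonneg (u*s + w*c), Real.sin_sq_add_cos_sq x, Real.cos_sq_le_one (y+z),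
      Real.sin_sq_le_one (z-y)]
  have h3 : u*c - w*s ≤ Real.sqrt 2 := by
    calc u*c - w*s ≤ |u*c - w*s| := le_abs_self _
      _ = Real.sqrt ((u*c - w*s)^2) := (Real.sqrt_sq_eq_abs _).symm
      _ ≤ Real.sqrt 2 := Real.sqrt_le_sqrt hs
  nlinarith

end Ex3

/-- `σ(N₁,N₂,N₃)`: trig polynomials with frequencies in `Δ(N₁,N₂,N₃)` taking only real
nonnegative values. -/
def sigmaSet (N₁ N₂ N₃ : ℕ) : Set ((ℝ × ℝ × ℝ) → ℂ) :=
  { f | (∃ q : ℤ × ℤ × ℤ → ℂ, f = fun v => ∑ δ ∈ Dbox N₁ N₂ N₃, q δ * eChar δ v) ∧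
        ∀ v, 0 ≤ f v }

/-- `Q(N₁,N₂,N₃)`: finite sums of squared moduli of trig polynomials with frequencies in `S`. -/
def QSet (N₁ N₂ N₃ : ℕ) : Set ((ℝ × ℝ × ℝ) → ℂ) :=
  { f | ∃ (r : ℕ) (q : Fin r → (ℤ × ℤ × ℤ) → ℂ),
      f = fun v => ∑ j, (‖∑ p ∈ Sbox N₁ N₂ N₃, q j p * eChar p v‖ : ℂ) ^ 2 }

/-- Example 3: with
`f₀(α,β,γ) = 4 − cos(α+β+γ) − cos(−α+β+γ) − cos(α−β+γ) + cos(α+β−γ)`, the polynomial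
`f₀ − m` belongs to `σ(1,1,1)` but not to `Q(1,1,1)` for every `0 < m ≤ 4 − 2^{3/2}`. -/
theorem f0_sub_m_in_sigma_not_Q (f₀ : ℝ × ℝ × ℝ → ℂ)
    (hf₀ : f₀ = fun v => (((4 : ℝ)
      - Real.cos (v.1 + v.2.1 + v.2.2) - Real.cos (-v.1 + v.2.1 + v.2.2)
      - Real.cos (v.1 - v.2.1 + v.2.2) + Real.cos (v.1 + v.2.1 - v.2.2) : ℝ) : ℂ))
    (m : ℝ) (hm0 : 0 < m) (hm : m ≤ 4 - (2 : ℝ) ^ ((3 : ℝ) / 2)) :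
    (fun v => f₀ v - (m : ℂ)) ∈ sigmaSet 1 1 1 ∧
    (fun v => f₀ v - (m : ℂ)) ∉ QSet 1 1 1 := by
  subst hf₀
  rw [Ex3.rpow32] at hm
  constructor
  · refine ⟨⟨Ex3.q0 m, funext fun v => ?_⟩, fun v => ?_⟩
    · exact Ex3.rep m v
    · obtain ⟨x, y, z⟩ := v
      simp only
      rw [← Complex.ofReal_sub, Complex.zero_le_real]
      have := Ex3.key_ineq x y z
      linarith
  · rintro ⟨r, q, hQ⟩
    have hpt : ∀ t : ℕ×ℕ×ℕ, (∑ δ' ∈ Dbox 1 1 1, Ex3.q0 m δ' * eChar δ' (Ex3.ptv t))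
        = ∑ j, ((‖∑ p ∈ Sbox 1 1 1, q j p * eChar p (Ex3.ptv t)‖ : ℝ):ℂ)^2 := by
      intro t
      have h1 := congrFun hQ (Ex3.ptv t)
      simp only at h1
      exact (Ex3.rep m (Ex3.ptv t)).symm.trans h1
    have key : ∀ δ ∈ Dbox 1 1 1, Ex3.q0 m δ
        = ∑ j, ∑ p' ∈ Sbox 1 1 1,
            (if δ + p' ∈ Sbox 1 1 1 then q j (δ+p') * (starRingEnd ℂ) (q j p') else 0) := by
      intro δ hδ
      apply mul_left_cancel₀ (show (27:ℂ) ≠ 0 by norm_num)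
      rw [← Ex3.Lcoeff m δ hδ, ← Ex3.Rcoeff r q δ hδ]
      exact Finset.sum_congr rfl fun t _ => by rw [hpt t]
    have e0 := key (0,0,0) (by decide)
    have e1 := key (1,1,1) (by decide)
    have e2 := key (-1,1,1) (by decide)
    have e3 := key (1,-1,1) (by decide)
    have e4 := key (1,1,-1) (by decide)
    simp_rw [Ex3.ev111] at e1
    simp_rw [Ex3.evm111] at e2
    simp_rw [Ex3.ev1m11] at e3
    simp_rw [Ex3.ev11m1] at e4
    simp_rw [Ex3.ev000] at e0
    simp only [show ∀ x : ℤ×ℤ×ℤ, (0,0,0) + x = x from fun x => zero_add x] at e0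
    simp only [show ((1,1,1):ℤ×ℤ×ℤ)+(0,0,0) = (1,1,1) from by decide] at e1
    simp only [show ((-1,1,1):ℤ×ℤ×ℤ)+(1,0,0) = (0,1,1) from by decide] at e2
    simp only [show ((1,-1,1):ℤ×ℤ×ℤ)+(0,1,0) = (1,0,1) from by decide] at e3
    simp only [show ((1,1,-1):ℤ×ℤ×ℤ)+(0,0,1) = (1,1,0) from by decide] at e4
    rw [Ex3.q0_val000] at e0
    rw [Ex3.q0_val111] at e1
    rw [Ex3.q0_valm11] at e2
    rw [Ex3.q0_val1m1] at e3
    rw [Ex3.q0_val11m] at e4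
    have b1 := Ex3.pair_bound (fun j => q j (1,1,1)) (fun j => q j (0,0,0)) (-(1/2))
      (by norm_num) e1.symm
    have b2 := Ex3.pair_bound (fun j => q j (0,1,1)) (fun j => q j (1,0,0)) (-(1/2))
      (by norm_num) e2.symm
    have b3 := Ex3.pair_bound (fun j => q j (1,0,1)) (fun j => q j (0,1,0)) (-(1/2))
      (by norm_num) e3.symm
    have b4 := Ex3.pair_bound (fun j => q j (1,1,0)) (fun j => q j (0,0,1)) (1/2)
      (by norm_num) e4.symm
    simp_rw [Complex.mul_conj] at e0
    have e0' : (4 - m : ℝ) = ∑ j, (Complex.normSq (q j (0,0,0)) + Complex.normSq (q j (0,0,1))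
        + Complex.normSq (q j (0,1,0)) + Complex.normSq (q j (0,1,1))
        + Complex.normSq (q j (1,0,0)) + Complex.normSq (q j (1,0,1))
        + Complex.normSq (q j (1,1,0)) + Complex.normSq (q j (1,1,1))) := by
      exact_mod_cast e0
    simp_rw [Finset.sum_add_distrib] at e0'
    linarith
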